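/- If σ is a non-degenerate k-simplex in ℝ^m (k ≥ 1), then its circumradius satisfies R(σ) ≤ L(σ)/(2·t(σ)). -/

import Mathlib

open Matrix Metric
open scoped Classical BigOperators

noncomputable section

/-- Euclidean space ℝ^m. -/
abbrev E (m : ℕ) := EuclideanSpace ℝ (Fin m)

/-- Euclidean norm of a plain vector. -/
noncomputable def euclNorm {n : ℕ} (v : Fin n → ℝ) : ℝ := Real.sqrt (∑ i, v i ^ 2)

/-- Largest singular value (operator norm) of a matrix. -/
noncomputable def largeSV {m k : ℕ} (P : Matrix (Fin m) (Fin k) ℝ) : ℝ :=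
  ⨆ x : {x : Fin k → ℝ // euclNorm x = 1}, euclNorm (P.mulVec x)

/-- Smallest singular value of a matrix. -/
noncomputable def smallSV {m k : ℕ} (P : Matrix (Fin m) (Fin k) ℝ) : ℝ :=
  ⨅ x : {x : Fin k → ℝ // euclNorm x = 1}, euclNorm (P.mulVec x)

/-- Matrix of edge vectors pᵢ − p₀ of a k-simplex. -/
noncomputable def vertMatrix {m k : ℕ} (p : Fin (k+1) → E m) : Matrix (Fin m) (Fin k) ℝ :=
  fun a j => p j.succ a - p 0 a

/-- Pseudo-inverse (PᵀP)⁻¹Pᵀ of a matrix of full column rank. -/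
noncomputable def pseudoInv {m k : ℕ} (P : Matrix (Fin m) (Fin k) ℝ) :
    Matrix (Fin k) (Fin m) ℝ := (Pᵀ * P)⁻¹ * Pᵀ

/-- Longest edge length of a simplex given by its vertices. -/
noncomputable def longEdge {m k : ℕ} (p : Fin (k+1) → E m) : ℝ :=
  ⨆ i, ⨆ j, dist (p i) (p j)

/-- Altitude of vertex i: distance to affine hull of the opposite facet. -/
noncomputable def altitude {m k : ℕ} (p : Fin (k+1) → E m) (i : Fin (k+1)) : ℝ :=
  Metric.infDist (p i) (↑(affineSpan ℝ (p '' {j | j ≠ i})) : Set (E m))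

/-- Thickness of a k-simplex: 1 if k = 0, else min altitude / (k · longest edge). -/
noncomputable def thickness {m k : ℕ} (p : Fin (k+1) → E m) : ℝ :=
  if k = 0 then 1 else (⨅ i, altitude p i) / (k * longEdge p)

/-- Longest edge of a finite vertex set. -/
noncomputable def fLongEdge {m : ℕ} (s : Finset (E m)) : ℝ := Metric.diam (s : Set (E m))

/-- Minimal altitude of a finite vertex set. -/
noncomputable def fMinAlt {m : ℕ} (s : Finset (E m)) : ℝ :=
  ⨅ p : {p // p ∈ s},
    Metric.infDist (p : E m) (↑(affineSpan ℝ ((s.erase (p : E m)) : Set (E m))) : Set (E m))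

/-- Thickness of a simplex given as a finite vertex set. -/
noncomputable def fThickness {m : ℕ} (s : Finset (E m)) : ℝ :=
  if s.card ≤ 1 then 1 else fMinAlt s / ((s.card - 1 : ℕ) * fLongEdge s)

/-- A simplex (finite vertex set) is Γ₀-good if every j-face has thickness ≥ Γ₀^j. -/
def isGood {m : ℕ} (Γ₀ : ℝ) (s : Finset (E m)) : Prop :=
  ∀ t ⊆ s, t.Nonempty → fThickness t ≥ Γ₀ ^ (t.card - 1)

/-- A Γ₀-flake: not Γ₀-good, but every facet is Γ₀-good. -/
def isFlake {m : ℕ} (Γ₀ : ℝ) (s : Finset (E m)) : Prop :=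
  ¬ isGood Γ₀ s ∧ ∀ p ∈ s, isGood Γ₀ (s.erase p)

/-- Circumradius bound: R(σ) ≤ L(σ)/(2 t(σ)). -/
theorem stmt6 {m k : ℕ} (hk : 1 ≤ k) (p : Fin (k+1) → E m)
    (hnd : 0 < thickness p)
    (c : E m) (R : ℝ)
    (hc : c ∈ (↑(affineSpan ℝ (Set.range p)) : Set (E m)))
    (hR : ∀ i, dist c (p i) = R) :
    R ≤ longEdge p / (2 * thickness p) := by
  have hk0 : k ≠ 0 := by omega
  set L := longEdge p with hLdef
  set a := ⨅ i, altitude p i with hadef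
  have hthick : thickness p = a / (k * L) := by simp [thickness, hk0, hadef, hLdef]
  -- basic bounds
  have hLedge : ∀ i j, dist (p i) (p j) ≤ L := by
    intro i j
    calc dist (p i) (p j) ≤ ⨆ j', dist (p i) (p j') :=
          le_ciSup (f := fun j' => dist (p i) (p j'))
          (Set.Finite.bddAbove (Set.finite_range _)) j
      _ ≤ L := le_ciSup (f := fun i => ⨆ j', dist (p i) (p j'))
          (Set.Finite.bddAbove (Set.finite_range _)) i
  have hL0 : 0 ≤ L := le_trans (by simp) (hLedge 0 0)
  have haalt : ∀ i, a ≤ altitude p i := fun i =>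
    ciInf_le (Set.Finite.bddBelow (Set.finite_range _)) i
  have ha0 : 0 ≤ a := le_ciInf fun i => Metric.infDist_nonneg
  have hapos : 0 < a := by
    rcases lt_or_eq_of_le ha0 with h | h
    · exact h
    · rw [hthick, ← h, zero_div] at hnd; exact absurd hnd (lt_irrefl 0)
  have hkL : 0 < (k : ℝ) * L := by
    rcases lt_or_eq_of_le (mul_nonneg (Nat.cast_nonneg k) hL0 : (0:ℝ) ≤ k * L) with h | h
    · exact h
    · rw [hthick, ← h, div_zero] at hnd; exact absurd hnd (lt_irrefl 0)
  have hLpos : 0 < L := by nlinarith [hkL, hL0, Nat.cast_nonneg (α := ℝ) k]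
  -- edge vectors
  set u : Fin k → E m := fun j => p j.succ - p 0 with hudef
  set v : E m := c - p 0 with hvdef
  have hRv : R = ‖v‖ := by rw [← hR 0, dist_eq_norm]
  have hR0 : 0 ≤ R := by rw [hRv]; positivity
  -- decompose v in the edge basis
  have hvmem : v ∈ Submodule.span ℝ (Set.range fun i : Fin (k+1) => p i -ᵥ p 0) := by
    rw [← vectorSpan_range_eq_span_range_vsub_right ℝ p 0, ← direction_affineSpan]
    exact AffineSubspace.vsub_mem_direction hc (mem_affineSpan ℝ ⟨0, rfl⟩)
  obtain ⟨μ', hμ'⟩ := (Submodule.mem_span_range_iff_exists_fun ℝ).1 hvmem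
  set μ : Fin k → ℝ := fun j => μ' j.succ with hμdef
  have hv : ∑ j, μ j • u j = v := by
    rw [← hμ', Fin.sum_univ_succ]
    simp [hudef, hμdef]
  -- inner products with edges
  have hinner : ∀ j : Fin k, (inner ℝ v (u j) : ℝ) = ‖u j‖ ^ 2 / 2 := by
    intro j
    have h1 : ‖v - u j‖ = ‖v‖ := by
      have : v - u j = c - p j.succ := by simp [hvdef, hudef]
      rw [this, ← dist_eq_norm, ← dist_eq_norm, hR j.succ, hR 0]
    have h2 := norm_sub_sq_real v (u j)
    rw [h1] at h2
    linarith
  -- altitude bound on coefficients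
  have hcoef : ∀ j : Fin k, a * |μ j| ≤ ‖v‖ := by
    intro j
    rcases eq_or_ne (μ j) 0 with h0 | h0
    · simp [h0]
    set A := affineSpan ℝ (p '' {i | i ≠ j.succ}) with hAdef
    have h0A : p 0 ∈ A := subset_affineSpan ℝ _ ⟨0, (Fin.succ_ne_zero j).symm, rfl⟩
    have hiA : ∀ i : Fin k, i ≠ j → p i.succ ∈ A := fun i hij =>
      subset_affineSpan ℝ _ ⟨i.succ, fun h => hij (Fin.succ_injective k h), rfl⟩
    have hdiru : ∀ i : Fin k, i ≠ j → u i ∈ A.direction := by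
      intro i hij
      have := AffineSubspace.vsub_mem_direction (hiA i hij) h0A
      simpa [hudef] using this
    set q : E m := p j.succ - (μ j)⁻¹ • v with hqdef
    have hqv : q - p 0 = -(∑ i ∈ Finset.univ.erase j, ((μ j)⁻¹ * μ i) • u i) := by
      have hexp : (μ j)⁻¹ • v = u j + ∑ i ∈ Finset.univ.erase j, ((μ j)⁻¹ * μ i) • u i := by
        rw [← hv, Finset.smul_sum]
        rw [← Finset.add_sum_erase _ (fun i => (μ j)⁻¹ • (μ i • u i)) (Finset.mem_univ j)]
        rw [smul_smul, inv_mul_cancel₀ h0, one_smul]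
        congr 1
        exact Finset.sum_congr rfl fun i _ => (smul_smul _ _ _)
      have huj : u j = p j.succ - p 0 := rfl
      rw [hqdef, hexp, huj]
      abel
    have hqA : q ∈ A := by
      have hmem : q - p 0 ∈ A.direction := by
        rw [hqv]
        exact Submodule.neg_mem _ (Submodule.sum_mem _ fun i hi =>
          Submodule.smul_mem _ _ (hdiru i (Finset.ne_of_mem_erase hi)))
      have := AffineSubspace.vadd_mem_of_mem_direction hmem h0A
      simpa using this
    have halt : altitude p j.succ ≤ dist (p j.succ) q :=
      Metric.infDist_le_dist_of_mem hqA
    have hdq : dist (p j.succ) q = |μ j|⁻¹ * ‖v‖ := by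
      rw [dist_eq_norm, hqdef]
      simp [norm_smul, abs_inv]
    have h1 : altitude p j.succ * |μ j| ≤ ‖v‖ := by
      have hμpos : 0 < |μ j| := abs_pos.2 h0
      rw [hdq] at halt
      calc altitude p j.succ * |μ j| ≤ (|μ j|⁻¹ * ‖v‖) * |μ j| := by
            apply mul_le_mul_of_nonneg_right halt hμpos.le
        _ = ‖v‖ := by field_simp
    calc a * |μ j| ≤ altitude p j.succ * |μ j| :=
          mul_le_mul_of_nonneg_right (haalt j.succ) (abs_nonneg _)
      _ ≤ ‖v‖ := h1
  -- main estimate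
  have hnorm : 2 * a * ‖v‖ ^ 2 ≤ k * (‖v‖ * L ^ 2) := by
    have h1 : ‖v‖ ^ 2 = ∑ j, μ j * (‖u j‖ ^ 2 / 2) := by
      rw [← real_inner_self_eq_norm_sq, ← hv, inner_sum]
      exact Finset.sum_congr rfl fun j _ => by
        rw [real_inner_smul_right, hv, hinner j]
    have h2 : ∀ j : Fin k, 2 * a * (μ j * (‖u j‖ ^ 2 / 2)) ≤ ‖v‖ * L ^ 2 := by
      intro j
      have hu : ‖u j‖ ≤ L := by
        have : ‖u j‖ = dist (p j.succ) (p 0) := by rw [dist_eq_norm]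
        rw [this]; exact hLedge _ _
      have hu0 : 0 ≤ ‖u j‖ := norm_nonneg _
      have hμ1 : a * μ j ≤ ‖v‖ := le_trans (by nlinarith [le_abs_self (μ j)]) (hcoef j)
      have hv0 : 0 ≤ ‖v‖ := norm_nonneg _
      have s2 : a * μ j * ‖u j‖ ^ 2 ≤ ‖v‖ * ‖u j‖ ^ 2 :=
        mul_le_mul_of_nonneg_right hμ1 (by positivity)
      have s3 : ‖v‖ * ‖u j‖ ^ 2 ≤ ‖v‖ * L ^ 2 :=
        mul_le_mul_of_nonneg_left (by nlinarith) hv0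
      have heq : 2 * a * (μ j * (‖u j‖ ^ 2 / 2)) = a * μ j * ‖u j‖ ^ 2 := by ring
      rw [heq]; linarith
    calc 2 * a * ‖v‖ ^ 2 = ∑ j : Fin k, 2 * a * (μ j * (‖u j‖ ^ 2 / 2)) := by
          rw [h1, Finset.mul_sum]
      _ ≤ ∑ j : Fin k, ‖v‖ * L ^ 2 := Finset.sum_le_sum fun j _ => h2 j
      _ = k * (‖v‖ * L ^ 2) := by simp [Finset.sum_const, mul_comm]
  -- conclude
  have hkpos : (0:ℝ) < k := by exact_mod_cast Nat.pos_of_ne_zero hk0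
  have hG : L / (2 * (a / ((k:ℝ) * L))) = (k:ℝ) * L ^ 2 / (2 * a) := by
    field_simp
  rw [hthick, hRv, hG, le_div_iff₀ (by positivity)]
  rcases eq_or_lt_of_le (norm_nonneg v) with h | h
  · rw [← h, zero_mul]; positivity
  · nlinarith [hnorm]
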